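/- Let f : (0,∞) → ℝ be defined by f(t) = t²(A − λ∫_I u² e^{t²u²/2} dx) where A = ‖u‖²_H, λ > 0, u ∈ L²(I)∖{0} with u² e^{t²u²/2} ∈ L¹(I) for all t, A − λ∫_I u² dx > 0, and ∫_I u⁴ dx > 0. Then: (a) f(t) > 0 for all sufficiently small t > 0; (b) f(t) → −∞ as t → ∞; (c) the map t ↦ ∫_I u² e^{t²u²/2} dx is strictly increasing on (0,∞); consequently there is a unique t₀ > 0 with f(t₀) = 0. -/

import Mathlib

open MeasureTheory Filter

theorem stmt_18 (I : Set ℝ) (hI : MeasurableSet I) (hIfin : volume I < ⊤)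
    (u : ℝ → ℝ) (A lam : ℝ) (hlam : 0 < lam)
    (hint : ∀ t : ℝ, IntegrableOn (fun x => u x ^ 2 * Real.exp (t ^ 2 * u x ^ 2 / 2)) I)
    (hint2 : IntegrableOn (fun x => u x ^ 2) I)
    (hint4 : IntegrableOn (fun x => u x ^ 4) I)
    (hu4 : 0 < ∫ x in I, u x ^ 4)
    (hA : lam * ∫ x in I, u x ^ 2 < A)
    (f : ℝ → ℝ)
    (hf : f = fun t => t ^ 2 * (A - lam * ∫ x in I, u x ^ 2 * Real.exp (t ^ 2 * u x ^ 2 / 2))) :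
    (∃ ε > (0:ℝ), ∀ t ∈ Set.Ioo (0:ℝ) ε, 0 < f t) ∧
    Tendsto f atTop atBot ∧
    StrictMonoOn (fun t => ∫ x in I, u x ^ 2 * Real.exp (t ^ 2 * u x ^ 2 / 2)) (Set.Ioi 0) ∧
    ∃! t₀ : ℝ, 0 < t₀ ∧ f t₀ = 0 := by
  have g : ℝ → ℝ := fun t => ∫ x in I, u x ^ 2 * Real.exp (t ^ 2 * u x ^ 2 / 2)
  set C : ℝ := ∫ x in I, u x ^ 4 with hC
  -- the set where u ≠ 0 has positive measure
  have hsupp : 0 < volume (Function.support (fun x => u x ^ 4) ∩ I) := by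
    rw [← setIntegral_pos_iff_support_of_nonneg_ae
      (ae_of_all _ fun x => by positivity) hint4]
    exact hu4
  -- strict monotonicity
  have hmono : StrictMonoOn
      (fun t => ∫ x in I, u x ^ 2 * Real.exp (t ^ 2 * u x ^ 2 / 2)) (Set.Ioi 0) := by
    intro s hs t ht hst
    simp only [Set.mem_Ioi] at hs ht
    have hsub : 0 < ∫ x in I,
        (u x ^ 2 * Real.exp (t ^ 2 * u x ^ 2 / 2)
          - u x ^ 2 * Real.exp (s ^ 2 * u x ^ 2 / 2)) := by
      have hnn : ∀ x, 0 ≤ u x ^ 2 * Real.exp (t ^ 2 * u x ^ 2 / 2)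
          - u x ^ 2 * Real.exp (s ^ 2 * u x ^ 2 / 2) := by
        intro x
        have h1 : s ^ 2 * u x ^ 2 / 2 ≤ t ^ 2 * u x ^ 2 / 2 := by
          have := mul_le_mul_of_nonneg_right
            (pow_le_pow_left₀ hs.le hst.le 2) (sq_nonneg (u x))
          linarith
        have h2 := Real.exp_le_exp.mpr h1
        nlinarith [sq_nonneg (u x)]
      rw [setIntegral_pos_iff_support_of_nonneg_ae (ae_of_all _ hnn)
        ((hint t).sub (hint s))]
      refine lt_of_lt_of_le hsupp (measure_mono ?_)
      rintro x ⟨hx1, hx2⟩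
      refine ⟨?_, hx2⟩
      have hux : u x ≠ 0 := by
        simp only [Function.mem_support] at hx1
        intro h; exact hx1 (by simp [h])
      have h2 : 0 < u x ^ 2 := by positivity
      have h3 : s ^ 2 * u x ^ 2 / 2 < t ^ 2 * u x ^ 2 / 2 := by
        have hss : s ^ 2 < t ^ 2 := by nlinarith
        have := mul_lt_mul_of_pos_right hss h2
        linarith
      have h4 := Real.exp_lt_exp.mpr h3
      simp only [Function.mem_support]
      nlinarith
    rw [integral_sub (hint t) (hint s)] at hsub
    simpa using sub_pos.mp hsub
  -- continuity of g
  have hgcont : Continuous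
      (fun t => ∫ x in I, u x ^ 2 * Real.exp (t ^ 2 * u x ^ 2 / 2)) := by
    rw [continuous_iff_continuousAt]
    intro t₀
    apply continuousAt_of_dominated
      (bound := fun x => u x ^ 2 * Real.exp ((|t₀| + 1) ^ 2 * u x ^ 2 / 2))
    · exact Eventually.of_forall fun t => (hint t).aestronglyMeasurable
    · filter_upwards [Metric.ball_mem_nhds t₀ one_pos] with t ht
      refine ae_of_all _ fun x => ?_
      rw [Real.norm_eq_abs, abs_of_nonneg (by positivity)]
      have habs : |t| ≤ |t₀| + 1 := by
        have h := abs_sub_abs_le_abs_sub t t₀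
        rw [Metric.mem_ball, Real.dist_eq] at ht
        linarith
      have ht2 : t ^ 2 ≤ (|t₀| + 1) ^ 2 := by
        have h0 : (0:ℝ) ≤ |t| := abs_nonneg t
        calc t ^ 2 = |t| ^ 2 := (sq_abs t).symm
          _ ≤ (|t₀| + 1) ^ 2 := by nlinarith
      gcongr
    · exact hint (|t₀| + 1)
    · refine ae_of_all _ fun x => ?_
      exact Continuous.continuousAt (by fun_prop)
  -- part (a)
  have hg0 : (∫ x in I, u x ^ 2 * Real.exp ((0:ℝ) ^ 2 * u x ^ 2 / 2))
      = ∫ x in I, u x ^ 2 := by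
    norm_num
  have hev : ∀ᶠ t in nhds (0:ℝ),
      lam * ∫ x in I, u x ^ 2 * Real.exp (t ^ 2 * u x ^ 2 / 2) < A := by
    have hc : ContinuousAt
        (fun t => lam * ∫ x in I, u x ^ 2 * Real.exp (t ^ 2 * u x ^ 2 / 2)) 0 :=
      (continuous_const.mul hgcont).continuousAt
    have h0 : lam * (∫ x in I, u x ^ 2 * Real.exp ((0:ℝ) ^ 2 * u x ^ 2 / 2)) < A := by
      rw [hg0]; exact hA
    exact hc.eventually_lt continuousAt_const h0
  obtain ⟨ε, hε, hball⟩ := Metric.eventually_nhds_iff.mp hev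
  have hfpos : ∀ t ∈ Set.Ioo (0:ℝ) ε, 0 < f t := by
    rintro t ⟨ht1, ht2⟩
    rw [hf]
    have h1 : lam * ∫ x in I, u x ^ 2 * Real.exp (t ^ 2 * u x ^ 2 / 2) < A :=
      hball (by rw [Real.dist_eq, sub_zero, abs_of_pos ht1]; exact ht2)
    exact mul_pos (pow_pos ht1 2) (sub_pos.mpr h1)
  -- lower bound for g
  have hlowg : ∀ t : ℝ, t ^ 2 / 2 * C
      ≤ ∫ x in I, u x ^ 2 * Real.exp (t ^ 2 * u x ^ 2 / 2) := by
    intro t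
    have hle : ∀ x ∈ I, t ^ 2 / 2 * u x ^ 4
        ≤ u x ^ 2 * Real.exp (t ^ 2 * u x ^ 2 / 2) := by
      intro x _
      have h1 : t ^ 2 * u x ^ 2 / 2 ≤ Real.exp (t ^ 2 * u x ^ 2 / 2) := by
        linarith [Real.add_one_le_exp (t ^ 2 * u x ^ 2 / 2)]
      nlinarith [sq_nonneg (u x), mul_le_mul_of_nonneg_left h1 (sq_nonneg (u x))]
    calc t ^ 2 / 2 * C = ∫ x in I, t ^ 2 / 2 * u x ^ 4 := (integral_const_mul _ _).symm
      _ ≤ _ := setIntegral_mono_on (hint4.const_mul _) (hint t) hI hle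
  -- part (b)
  have hlow : ∀ t : ℝ, f t ≤ t ^ 2 * (A - lam * (t ^ 2 / 2 * C)) := by
    intro t
    rw [hf]
    have hb := hlowg t
    have h0 := mul_nonneg (mul_nonneg (sq_nonneg t) hlam.le) (sub_nonneg.mpr hb)
    nlinarith
  have htop : Tendsto (fun t : ℝ => t ^ 2 * (A - lam * (t ^ 2 / 2 * C))) atTop atBot := by
    have h1 : Tendsto (fun t : ℝ => t ^ 2) atTop atTop :=
      tendsto_pow_atTop two_ne_zero
    have h3 : Tendsto (fun t : ℝ => lam * (t ^ 2 / 2 * C)) atTop atTop := by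
      have h4 : Tendsto (fun t : ℝ => t ^ 2 * (lam * C / 2)) atTop atTop :=
        Tendsto.atTop_mul_const (by positivity) h1
      convert h4 using 2 with t
      ring
    have h2 : Tendsto (fun t : ℝ => A - lam * (t ^ 2 / 2 * C)) atTop atBot := by
      have := tendsto_neg_atTop_atBot.comp h3
      have h5 := tendsto_atBot_add_const_left atTop A this
      convert h5 using 1
      funext t; simp only [Function.comp_apply]; ring
    exact h1.atTop_mul_atBot₀ h2
  have hbot : Tendsto f atTop atBot := tendsto_atBot_mono hlow htop
  -- existence and uniqueness
  have hfcont : Continuous f := by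
    rw [hf]
    exact (continuous_pow 2).mul (continuous_const.sub (continuous_const.mul hgcont))
  have hfa : 0 < f (ε / 2) := hfpos (ε / 2) ⟨by positivity, by linarith⟩
  obtain ⟨b, hb⟩ := (hbot.eventually (eventually_lt_atBot (0:ℝ))).exists_forall_of_atTop
  set b' : ℝ := max b (ε / 2 + 1) with hb'
  have hab : ε / 2 < b' := lt_of_lt_of_le (by linarith) (le_max_right _ _)
  have hfb : f b' < 0 := hb b' (le_max_left _ _)
  have h0mem : (0:ℝ) ∈ Set.Icc (f b') (f (ε / 2)) := ⟨hfb.le, hfa.le⟩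
  obtain ⟨t₀, ht₀mem, ht₀eq⟩ :=
    intermediate_value_Icc' hab.le hfcont.continuousOn h0mem
  have ht₀pos : 0 < t₀ := lt_of_lt_of_le (by positivity) ht₀mem.1
  -- uniqueness helper
  have key : ∀ s : ℝ, 0 < s → f s = 0 →
      (∫ x in I, u x ^ 2 * Real.exp (s ^ 2 * u x ^ 2 / 2)) = A / lam := by
    intro s hs h
    rw [hf] at h
    have hs2 : (s:ℝ) ^ 2 ≠ 0 := by positivity
    have h1 : A - lam * ∫ x in I, u x ^ 2 * Real.exp (s ^ 2 * u x ^ 2 / 2) = 0 := by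
      rcases mul_eq_zero.mp h with h' | h'
      · exact absurd h' hs2
      · exact h'
    rw [eq_div_iff hlam.ne']
    linarith
  refine ⟨⟨ε, hε, hfpos⟩, hbot, hmono, t₀, ⟨ht₀pos, ht₀eq⟩, ?_⟩
  rintro s ⟨hs, hfs⟩
  exact hmono.injOn hs ht₀pos ((key s hs hfs).trans (key t₀ ht₀pos ht₀eq).symm)
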